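/- If Y and Z are comonotone random variables (i.e., (Y(ω₁) - Y(ω₂))(Z(ω₁) - Z(ω₂)) ≥ 0 for P⊗P-almost all (ω₁, ω₂)), then there exist nondecreasing functions h_Y and h_Z with h_Y(x) + h_Z(x) = x for all x, such that Y = h_Y(Y + Z) and Z = h_Z(Y + Z) almost surely. -/

import Mathlib

open MeasureTheory

section Aux

open TopologicalSpace Set

variable {α : Type*} [TopologicalSpace α] [MeasurableSpace α] [OpensMeasurableSpace α]
  [SecondCountableTopology α] (μ : Measure α)

/-- There is an open null set whose complement is "self-supporting": every open set meeting the
complement has positive measure. -/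
lemma exists_open_null_supports (μ : Measure α) :
    ∃ V : Set α, IsOpen V ∧ μ V = 0 ∧
      ∀ q ∉ V, ∀ U : Set α, IsOpen U → q ∈ U → 0 < μ U := by
  classical
  set 𝒮 : Set (Set α) := {u | u ∈ countableBasis α ∧ μ u = 0} with h𝒮
  refine ⟨⋃₀ 𝒮, ?_, ?_, ?_⟩
  · exact isOpen_sUnion fun u hu => (isBasis_countableBasis α).isOpen hu.1
  · exact (measure_sUnion_null_iff ((countable_countableBasis α).mono
      (fun u hu => hu.1))).2 fun u hu => hu.2
  · intro q hq U hU hqU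
    by_contra h
    push_neg at h
    have hU0 : μ U = 0 := le_antisymm h zero_le
    obtain ⟨t, ht, hqt, htU⟩ := (isBasis_countableBasis α).exists_subset_of_mem_open hqU hU
    exact hq ⟨t, ⟨ht, measure_mono_null htU hU0⟩, hqt⟩

end Aux

/-- If `Y` and `Z` are comonotone random variables, then there exist nondecreasing
functions `hY`, `hZ` with `hY x + hZ x = x` such that `Y = hY ∘ (Y + Z)` and
`Z = hZ ∘ (Y + Z)` almost surely. -/
theorem stmt_0 {Ω : Type*} [MeasurableSpace Ω] (P : Measure Ω) [IsProbabilityMeasure P]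
    (Y Z : Ω → ℝ) (hYm : Measurable Y) (hZm : Measurable Z)
    (hcom : ∀ᵐ p ∂(P.prod P), 0 ≤ (Y p.1 - Y p.2) * (Z p.1 - Z p.2)) :
    ∃ hY hZ : ℝ → ℝ, Monotone hY ∧ Monotone hZ ∧ (∀ x : ℝ, hY x + hZ x = x) ∧
      (∀ᵐ ω ∂P, Y ω = hY (Y ω + Z ω)) ∧ (∀ᵐ ω ∂P, Z ω = hZ (Y ω + Z ω)) := by
  classical
  set g : Ω → ℝ × ℝ := fun ω => (Y ω, Z ω) with hg
  have hgm : Measurable g := hYm.prodMk hZm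
  set μ : Measure (ℝ × ℝ) := P.map g with hμ
  have hprob : IsProbabilityMeasure μ := Measure.isProbabilityMeasure_map hgm.aemeasurable
  -- the "bad" (anti-comonotone) set
  set B : Set ((ℝ × ℝ) × (ℝ × ℝ)) := {p | (p.1.1 - p.2.1) * (p.1.2 - p.2.2) < 0} with hB
  have hBopen : IsOpen B := by
    have : Continuous fun p : (ℝ × ℝ) × (ℝ × ℝ) => (p.1.1 - p.2.1) * (p.1.2 - p.2.2) := by
      fun_prop
    exact isOpen_lt this continuous_const
  have hBmeas : MeasurableSet B := hBopen.measurableSet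
  have hμB : (μ.prod μ) B = 0 := by
    rw [hμ, Measure.map_prod_map _ _ hgm hgm,
      Measure.map_apply (hgm.prodMap hgm) hBmeas]
    have : (Prod.map g g) ⁻¹' B = {p : Ω × Ω | (Y p.1 - Y p.2) * (Z p.1 - Z p.2) < 0} := rfl
    rw [this]
    have := hcom
    rw [MeasureTheory.ae_iff] at this
    convert this using 2
    ext p
    simp [not_le]
  -- Fubini: for a.e. q, the slice of B at q is null
  have hslice : ∀ᵐ q ∂μ, μ (Prod.mk q ⁻¹' B) = 0 :=
    (Measure.measure_prod_null hBmeas).1 hμB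
  obtain ⟨V, hVopen, hVnull, hVsupp⟩ := exists_open_null_supports μ
  set G : Set (ℝ × ℝ) := {q | μ (Prod.mk q ⁻¹' B) = 0} with hGdef
  have hGmeas : MeasurableSet G :=
    (measurable_measure_prodMk_left hBmeas) (measurableSet_singleton 0)
  set S : Set (ℝ × ℝ) := Vᶜ ∩ G with hSdef
  have hSmeas : MeasurableSet S := (hVopen.measurableSet.compl).inter hGmeas
  have hSae : ∀ᵐ q ∂μ, q ∈ S := by
    filter_upwards [hslice, measure_eq_zero_iff_ae_notMem.1 hVnull] with q h1 h2
    exact ⟨h2, h1⟩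
  -- the chain (comonotonicity) property of S
  have hchain : ∀ p ∈ S, ∀ q ∈ S, 0 ≤ (p.1 - q.1) * (p.2 - q.2) := by
    intro p hp q hq
    by_contra h
    push_neg at h
    have hqB : q ∈ Prod.mk p ⁻¹' B := h
    have hopen : IsOpen (Prod.mk p ⁻¹' B) := hBopen.preimage (Continuous.prodMk_right p)
    have hpos : 0 < μ (Prod.mk p ⁻¹' B) := hVsupp q hq.1 _ hopen hqB
    exact hpos.ne' hp.2
  -- S is nonempty
  have hSne : S.Nonempty := by
    have : (MeasureTheory.ae μ).NeBot :=
      ae_neBot.2 (IsProbabilityMeasure.ne_zero μ)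
    obtain ⟨q, hq⟩ := hSae.exists
    exact ⟨q, hq⟩
  obtain ⟨p₀, hp₀⟩ := hSne
  -- the extension function
  set F : ℝ × ℝ → ℝ → ℝ := fun q x => q.1 + max (x - (q.1 + q.2)) 0 with hF
  set hY : ℝ → ℝ := fun x => sInf ((fun q => F q x) '' S) with hYdef
  set hZ : ℝ → ℝ := fun x => x - hY x with hZdef
  have himne : ∀ x : ℝ, ((fun q => F q x) '' S).Nonempty := fun x => ⟨F p₀ x, p₀, hp₀, rfl⟩
  have hbdd : ∀ x : ℝ, min p₀.1 (x - p₀.2) ∈ lowerBounds ((fun q => F q x) '' S) := by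
    rintro x _ ⟨q, hq, rfl⟩
    rcases le_or_gt p₀.1 q.1 with h | h
    · calc min p₀.1 (x - p₀.2) ≤ p₀.1 := min_le_left _ _
        _ ≤ q.1 := h
        _ ≤ F q x := le_add_of_nonneg_right (le_max_right _ _)
    · have hc := hchain q hq p₀ hp₀
      have hq2 : q.2 ≤ p₀.2 := by nlinarith
      calc min p₀.1 (x - p₀.2) ≤ x - p₀.2 := min_le_right _ _
        _ ≤ x - q.2 := by linarith
        _ ≤ q.1 + (x - (q.1 + q.2)) := by linarith
        _ ≤ F q x := by
            have := le_max_left (x - (q.1 + q.2)) (0 : ℝ)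
            simp only [hF]; linarith
  have hbddBelow : ∀ x : ℝ, BddBelow ((fun q => F q x) '' S) :=
    fun x => ⟨_, hbdd x⟩
  -- key: hY recovers the first coordinate on S
  have hkey : ∀ p ∈ S, ∀ q ∈ S, p.1 ≤ F q (p.1 + p.2) := by
    intro p hp q hq
    rcases le_or_gt p.1 q.1 with h | h
    · calc p.1 ≤ q.1 := h
        _ ≤ F q (p.1 + p.2) := le_add_of_nonneg_right (le_max_right _ _)
    · have hc := hchain p hp q hq
      have hp2 : q.2 ≤ p.2 := by nlinarith
      calc p.1 ≤ q.1 + (p.1 + p.2 - (q.1 + q.2)) := by linarith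
        _ ≤ F q (p.1 + p.2) := by
            have := le_max_left (p.1 + p.2 - (q.1 + q.2)) (0 : ℝ)
            simp only [hF]; linarith
  have hYeq : ∀ p ∈ S, hY (p.1 + p.2) = p.1 := by
    intro p hp
    refine le_antisymm ?_ (le_csInf (himne _) ?_)
    · have : F p (p.1 + p.2) = p.1 := by
        simp only [hF, sub_self, max_self]
        simp
      calc hY (p.1 + p.2) ≤ F p (p.1 + p.2) :=
            csInf_le (hbddBelow _) ⟨p, hp, rfl⟩
        _ = p.1 := this
    · rintro b ⟨q, hq, rfl⟩
      exact hkey p hp q hq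
  have hYmono : Monotone hY := by
    intro x x' hxx'
    refine le_csInf (himne _) ?_
    rintro b ⟨q, hq, rfl⟩
    calc hY x ≤ F q x := csInf_le (hbddBelow _) ⟨q, hq, rfl⟩
      _ ≤ F q x' := by
          have : max (x - (q.1 + q.2)) 0 ≤ max (x' - (q.1 + q.2)) 0 :=
            max_le_max (by linarith) le_rfl
          simp only [hF]; linarith
  have hZmono : Monotone hZ := by
    intro x x' hxx'
    have : hY x' ≤ hY x + (x' - x) := by
      have h1 : ∀ q ∈ S, hY x' ≤ F q x + (x' - x) := by
        intro q hq
        calc hY x' ≤ F q x' := csInf_le (hbddBelow _) ⟨q, hq, rfl⟩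
          _ ≤ F q x + (x' - x) := by
              have : max (x' - (q.1 + q.2)) 0 ≤ max (x - (q.1 + q.2)) 0 + (x' - x) := by
                have h3 := le_max_left (x - (q.1 + q.2)) (0 : ℝ)
                have h4 := le_max_right (x - (q.1 + q.2)) (0 : ℝ)
                apply max_le <;> linarith
              simp only [hF]; linarith
      have h2 : hY x' - (x' - x) ≤ hY x := by
        refine le_csInf (himne _) ?_
        rintro b ⟨q, hq, rfl⟩
        have := h1 q hq
        linarith
      linarith
    simp only [hZdef]
    linarith
  refine ⟨hY, hZ, hYmono, hZmono, fun x => by simp only [hZdef]; ring, ?_, ?_⟩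
  · have hae : ∀ᵐ ω ∂P, g ω ∈ S :=
      (ae_map_iff hgm.aemeasurable hSmeas).1 hSae
    filter_upwards [hae] with ω hω
    have := hYeq (g ω) hω
    simpa [hg] using this.symm
  · have hae : ∀ᵐ ω ∂P, g ω ∈ S :=
      (ae_map_iff hgm.aemeasurable hSmeas).1 hSae
    filter_upwards [hae] with ω hω
    have h1 := hYeq (g ω) hω
    simp only [hg] at h1
    simp only [hZdef, h1]
    ring
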